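/- Let B be a right nilpotent skew brace. If A is a sub skew brace of B such that A + B² = B (every element of B is a sum a + x with a ∈ A and x ∈ B²) and A*B ⊆ A, then A = B. Here B² = B*B. -/

import Mathlib

/-- A skew brace: a type with two group structures `(B,+)` and `(B,∘)`
(the multiplicative group is written with `*`) sharing the same underlying set,
such that `a ∘ (b + c) = a ∘ b - a + a ∘ c`. -/
class SkewBrace (B : Type*) extends AddGroup B, Group B where
  circ_add : ∀ a b c : B, a * (b + c) = a * b - a + a * c

namespace SkewBrace

variable {B : Type*} [SkewBrace B]

/-- `lam a b = -a + a ∘ b`, i.e. `λ_a(b)`. -/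
def lam (a b : B) : B := -a + a * b

/-- `a * b` (the star operation) `= λ_a(b) - b = -a + a ∘ b - b`. -/
def starOp (a b : B) : B := -a + a * b - b

/-- `X * Y` : the additive subgroup generated by all `x * y`, `x ∈ X`, `y ∈ Y`,
regarded as a set. -/
def starSpan (X Y : Set B) : Set B :=
  (AddSubgroup.closure {z : B | ∃ x ∈ X, ∃ y ∈ Y, z = starOp x y} : AddSubgroup B)

/-- `[X,Y]₊` : the additive subgroup generated by all additive commutators
`x + y - x - y`, `x ∈ X`, `y ∈ Y`, regarded as a set. -/
def addCommSpan (X Y : Set B) : Set B :=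
  (AddSubgroup.closure {z : B | ∃ x ∈ X, ∃ y ∈ Y, z = x + y - x - y} : AddSubgroup B)

/-- A sub skew brace: a subset containing `0` and closed under both group
operations and both inverses. -/
def IsSubSkewBrace (S : Set B) : Prop :=
  0 ∈ S ∧ (∀ a ∈ S, ∀ b ∈ S, a + b ∈ S) ∧ (∀ a ∈ S, -a ∈ S) ∧
    (∀ a ∈ S, ∀ b ∈ S, a * b ∈ S) ∧ (∀ a ∈ S, a⁻¹ ∈ S)

/-- An ideal: a sub skew brace that is normal in `(B,+)` and in `(B,∘)` and
invariant under all `λ_a`. -/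
def IsIdeal (S : Set B) : Prop :=
  IsSubSkewBrace S ∧ (∀ a : B, ∀ i ∈ S, a + i - a ∈ S) ∧
    (∀ a : B, ∀ i ∈ S, a * i * a⁻¹ ∈ S) ∧ (∀ a : B, ∀ i ∈ S, lam a i ∈ S)

/-- The annihilator `Ann(B) = {x | x∘a = a∘x = x+a = a+x for all a}`. -/
def annSet (B : Type*) [SkewBrace B] : Set B :=
  {x | ∀ a : B, x * a = a * x ∧ x * a = x + a ∧ x + a = a + x}

/-- The annihilator series: `Ann₀(B) = 0` and `Ann_{n+1}(B)` is the preimage of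
`Ann(B/Annₙ(B))` under the quotient map; membership is expressed via coset
equalities modulo `Annₙ(B)`. -/
def annSeries (B : Type*) [SkewBrace B] : ℕ → Set B
  | 0 => {0}
  | n + 1 => {x | ∀ a : B,
      x * a - a * x ∈ annSeries B n ∧
      x * a - (x + a) ∈ annSeries B n ∧
      (x + a) - (a + x) ∈ annSeries B n}

/-- `B` is annihilator nilpotent if `Annₙ(B) = B` for some `n`. -/
def AnnNilpotent (B : Type*) [SkewBrace B] : Prop :=
  ∃ n : ℕ, annSeries B n = Set.univ

/-- `leftPow B n` is `B^{n+1}`: `B¹ = B`, `B^{n+1} = B * Bⁿ`. -/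
def leftPow (B : Type*) [SkewBrace B] : ℕ → Set B
  | 0 => Set.univ
  | n + 1 => starSpan Set.univ (leftPow B n)

/-- `rightPow B n` is `B⁽ⁿ⁺¹⁾`: `B⁽¹⁾ = B`, `B⁽ⁿ⁺¹⁾ = B⁽ⁿ⁾ * B`. -/
def rightPow (B : Type*) [SkewBrace B] : ℕ → Set B
  | 0 => Set.univ
  | n + 1 => starSpan (rightPow B n) Set.univ

/-- `B` is left nilpotent if `Bⁿ = 0` for some `n ≥ 1`. -/
def LeftNilpotent (B : Type*) [SkewBrace B] : Prop :=
  ∃ n : ℕ, leftPow B n = ({0} : Set B)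

/-- `B` is right nilpotent if `B⁽ⁿ⁾ = 0` for some `n ≥ 1`. -/
def RightNilpotent (B : Type*) [SkewBrace B] : Prop :=
  ∃ n : ℕ, rightPow B n = ({0} : Set B)

/-- `strongPow B n` is `B^[n+1]`: `B^[1] = B`, and `B^[n+1]` is the additive
subgroup generated by `⋃_{i=1}^{n} B^[i] * B^[n+1-i]`. -/
def strongPow (B : Type*) [SkewBrace B] : ℕ → Set B
  | 0 => Set.univ
  | n + 1 => (AddSubgroup.closure (⋃ j : Fin (n + 1),
      {z : B | ∃ x ∈ strongPow B j.1, ∃ y ∈ strongPow B (n - j.1), z = starOp x y}) :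
        AddSubgroup B)
  decreasing_by
  · exact j.isLt
  · omega

/-- `B` is strongly nilpotent if `B^[n] = 0` for some `n ≥ 1`. -/
def StronglyNilpotent (B : Type*) [SkewBrace B] : Prop :=
  ∃ n : ℕ, strongPow B n = ({0} : Set B)

/-- `gammaAux B n` is `Γ_[n+1](B)`: `Γ_[1](B) = B` and, for `n ≥ 2`, `Γ_[n](B)` is
the additive subgroup generated by the sets `Γ_[i](B) * Γ_[n-i](B)` and
`[Γ_[i](B), Γ_[n-i](B)]₊` for `1 ≤ i ≤ n-1`. -/
def gammaAux (B : Type*) [SkewBrace B] : ℕ → Set B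
  | 0 => Set.univ
  | n + 1 => (AddSubgroup.closure (⋃ j : Fin (n + 1),
      {z : B | ∃ x ∈ gammaAux B j.1, ∃ y ∈ gammaAux B (n - j.1),
        z = starOp x y ∨ z = x + y - x - y}) : AddSubgroup B)
  decreasing_by
  · exact j.isLt
  · omega

/-- `Γ_[n](B)` for `n ≥ 1` (one-based indexing as in the paper). -/
def gammaBr (B : Type*) [SkewBrace B] (n : ℕ) : Set B := gammaAux B (n - 1)

/-- `B` is finitely generated as a skew brace: there is a finite subset whose
smallest containing sub skew brace is `B` itself. -/
def SBFinitelyGenerated (B : Type*) [SkewBrace B] : Prop :=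
  ∃ S : Set B, S.Finite ∧ ∀ T : Set B, IsSubSkewBrace T → S ⊆ T → T = Set.univ

/-- `B` satisfies the ascending chain condition on sub skew braces. -/
def ACCSubSkewBrace (B : Type*) [SkewBrace B] : Prop :=
  ∀ f : ℕ → Set B, (∀ n, IsSubSkewBrace (f n)) → (∀ n, f n ⊆ f (n + 1)) →
    ∃ N : ℕ, ∀ n, N ≤ n → f n = f N


section Aux

variable {B : Type*} [SkewBrace B]

lemma circ_zero (a : B) : a * 0 = a := by
  have h := SkewBrace.circ_add a 0 0
  rw [add_zero] at h
  have h2 : (0 : B) + a * 0 = a * 0 - a + a * 0 := by rw [zero_add, ← h]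
  have h3 := add_right_cancel h2
  exact (sub_eq_zero.mp h3.symm)

lemma zero_eq_one : (0 : B) = 1 := by
  have h := circ_zero (1 : B)
  rwa [one_mul] at h

lemma circ_neg (a b : B) : a * (-b) = a - a * b + a := by
  have h := SkewBrace.circ_add a b (-b)
  rw [add_neg_cancel, circ_zero] at h
  have h2 : a * (-b) = -(a * b - a) + ((a * b - a) + a * (-b)) :=
    (neg_add_cancel_left _ _).symm
  rw [← h] at h2
  rw [h2, neg_sub]

lemma lam_add (a b c : B) : lam a (b + c) = lam a b + lam a c := by
  simp only [lam, SkewBrace.circ_add, sub_eq_add_neg, add_assoc]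

lemma lam_zero (a : B) : lam a 0 = 0 := by
  simp [lam, circ_zero]

lemma lam_neg (a b : B) : lam a (-b) = -lam a b := by
  have h := lam_add a b (-b)
  rw [add_neg_cancel, lam_zero] at h
  exact (neg_eq_of_add_eq_zero_right h.symm).symm

lemma lam_sub (a b c : B) : lam a (b - c) = lam a b - lam a c := by
  rw [sub_eq_add_neg, lam_add, lam_neg, ← sub_eq_add_neg]

lemma lam_mul (a b c : B) : lam (a * b) c = lam a (lam b c) := by
  simp only [lam, SkewBrace.circ_add, circ_neg, mul_assoc, sub_eq_add_neg, add_assoc,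
    neg_add_cancel_left, add_neg_cancel_left, neg_add_cancel, add_zero, neg_add_rev]

lemma lam_one (b : B) : lam 1 b = b := by
  rw [lam, one_mul, ← zero_eq_one, neg_zero, zero_add]

lemma lam_lam_inv (a b : B) : lam a (lam a⁻¹ b) = b := by
  rw [← lam_mul, mul_inv_cancel, lam_one]

lemma lam_inv_lam (a b : B) : lam a⁻¹ (lam a b) = b := by
  rw [← lam_mul, inv_mul_cancel, lam_one]

lemma lam_inv_self (a : B) : lam a a⁻¹ = -a := by
  rw [lam, mul_inv_cancel, ← zero_eq_one, add_zero]

lemma circ_eq_add_lam (a b : B) : a * b = a + lam a b := by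
  rw [lam, add_neg_cancel_left]

lemma star_eq (a b : B) : starOp a b = lam a b - b := rfl

lemma star_key (a y d : B) :
    starOp (a * y) d = starOp a (starOp y d) + starOp y d + starOp a d := by
  rw [star_eq, star_eq, star_eq, star_eq, lam_mul, sub_add_cancel, lam_sub,
    sub_add_sub_cancel]

lemma star_conj_lam (a x y : B) :
    lam a (starOp x y) = starOp (a * x * a⁻¹) (lam a y) := by
  rw [star_eq, star_eq, lam_sub, lam_mul, lam_mul, lam_inv_lam]

lemma star_add_conj (x b c : B) :
    b + starOp x c - b = -(starOp x b) + starOp x (b + c) := by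
  simp only [star_eq, lam_add]
  simp [sub_eq_add_neg, neg_add_rev, add_assoc]

lemma circ_conj_eq (a z : B) :
    a * z * a⁻¹ = a + (lam a z + lam a (starOp z a⁻¹)) - a := by
  rw [← lam_add, star_eq]
  have h1 : z + (lam z a⁻¹ - a⁻¹) = z * a⁻¹ - a⁻¹ := by
    rw [sub_eq_add_neg, sub_eq_add_neg, ← add_assoc, ← circ_eq_add_lam]
  rw [h1, lam_sub, lam_inv_self, sub_neg_eq_add, lam]
  rw [← mul_assoc]
  simp [sub_eq_add_neg, add_assoc]

/-- Generator set of `rightPow B (n+1)`. -/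
def rpGen (B : Type*) [SkewBrace B] (n : ℕ) : Set B :=
  {z : B | ∃ x ∈ rightPow B n, ∃ y ∈ (Set.univ : Set B), z = starOp x y}

lemma rightPow_succ (n : ℕ) :
    rightPow B (n + 1) = (AddSubgroup.closure (rpGen B n) : AddSubgroup B) := rfl

lemma mem_rightPow_succ {z : B} {n : ℕ} :
    z ∈ rightPow B (n + 1) ↔ z ∈ AddSubgroup.closure (rpGen B n) := Iff.rfl

lemma rp_star_mem {x : B} {n : ℕ} (hx : x ∈ rightPow B n) (y : B) :
    starOp x y ∈ rightPow B (n + 1) :=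
  AddSubgroup.subset_closure ⟨x, hx, y, trivial, rfl⟩

lemma rp_zero_mem (n : ℕ) : (0 : B) ∈ rightPow B n := by
  cases n with
  | zero => trivial
  | succ n => exact (AddSubgroup.closure (rpGen B n)).zero_mem

lemma rp_add_mem {n : ℕ} {x y : B} (hx : x ∈ rightPow B n) (hy : y ∈ rightPow B n) :
    x + y ∈ rightPow B n := by
  cases n with
  | zero => trivial
  | succ n => exact (AddSubgroup.closure (rpGen B n)).add_mem hx hy

lemma rp_neg_mem {n : ℕ} {x : B} (hx : x ∈ rightPow B n) : -x ∈ rightPow B n := by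
  cases n with
  | zero => trivial
  | succ n => exact (AddSubgroup.closure (rpGen B n)).neg_mem hx

lemma rp_mono : ∀ n : ℕ, rightPow B (n + 1) ⊆ rightPow B n := by
  intro n
  induction n with
  | zero => exact fun x _ => trivial
  | succ n ih =>
      intro z hz
      rw [mem_rightPow_succ] at hz ⊢
      refine AddSubgroup.closure_mono ?_ hz
      rintro w ⟨x, hx, y, -, rfl⟩
      exact ⟨x, ih hx, y, trivial, rfl⟩

lemma rp_add_conj {n : ℕ} (b : B) {z : B} (hz : z ∈ rightPow B n) :
    b + z - b ∈ rightPow B n := by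
  cases n with
  | zero => trivial
  | succ n =>
      rw [mem_rightPow_succ] at hz ⊢
      induction hz using AddSubgroup.closure_induction with
      | mem w hw =>
          obtain ⟨x, hx, c, -, rfl⟩ := hw
          rw [star_add_conj]
          exact AddSubgroup.add_mem _
            (AddSubgroup.neg_mem _ (AddSubgroup.subset_closure ⟨x, hx, b, trivial, rfl⟩))
            (AddSubgroup.subset_closure ⟨x, hx, b + c, trivial, rfl⟩)
      | zero => simpa using AddSubgroup.zero_mem _
      | add u v _ _ hu hv =>
          have : b + (u + v) - b = (b + u - b) + (b + v - b) := by
            simp [sub_eq_add_neg, add_assoc]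
          rw [this]; exact AddSubgroup.add_mem _ hu hv
      | neg u _ hu =>
          have : b + (-u) - b = -(b + u - b) := by
            simp [sub_eq_add_neg, neg_add_rev, add_assoc]
          rw [this]; exact AddSubgroup.neg_mem _ hu

lemma rp_lam_circ : ∀ n : ℕ,
    (∀ a : B, ∀ z ∈ rightPow B n, lam a z ∈ rightPow B n) ∧
      (∀ a : B, ∀ z ∈ rightPow B n, a * z * a⁻¹ ∈ rightPow B n) := by
  have key : ∀ n : ℕ,
      (∀ a : B, ∀ z ∈ rightPow B n, lam a z ∈ rightPow B n) →
      (∀ a : B, ∀ z ∈ rightPow B n, a * z * a⁻¹ ∈ rightPow B n) := by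
    intro n hlam a z hz
    rw [circ_conj_eq]
    have h1 : starOp z a⁻¹ ∈ rightPow B n := rp_mono n (rp_star_mem hz a⁻¹)
    exact rp_add_conj a (rp_add_mem (hlam a z hz) (hlam a _ h1))
  intro n
  induction n with
  | zero => exact ⟨fun _ _ _ => trivial, fun _ _ _ => trivial⟩
  | succ n ih =>
      have hlam : ∀ a : B, ∀ z ∈ rightPow B (n + 1), lam a z ∈ rightPow B (n + 1) := by
        intro a z hz
        rw [mem_rightPow_succ] at hz
        rw [mem_rightPow_succ]
        induction hz using AddSubgroup.closure_induction with
        | mem w hw =>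
            obtain ⟨x, hx, y, -, rfl⟩ := hw
            rw [star_conj_lam]
            exact AddSubgroup.subset_closure ⟨a * x * a⁻¹, ih.2 a x hx, lam a y, trivial, rfl⟩
        | zero => simpa [lam_zero] using AddSubgroup.zero_mem _
        | add u v _ _ hu hv =>
            rw [lam_add]; exact AddSubgroup.add_mem _ hu hv
        | neg u _ hu =>
            rw [lam_neg]; exact AddSubgroup.neg_mem _ hu
      exact ⟨hlam, key (n + 1) hlam⟩

end Aux

/-- Theorem 5.1: if `B` is a right nilpotent skew brace and `A` is a
sub skew brace with `A + B² = B` and `A * B ⊆ A`, then `A = B`.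
Here `B² = B * B`. -/
theorem stmt17 {B : Type*} [SkewBrace B] (hr : RightNilpotent B)
    (A : Set B) (hA : IsSubSkewBrace A)
    (hsum : ∀ b : B, ∃ a ∈ A, ∃ x ∈ starSpan (Set.univ : Set B) Set.univ, b = a + x)
    (hstar : starSpan A (Set.univ : Set B) ⊆ A) :
    A = Set.univ := by
  obtain ⟨n, hn⟩ := hr
  obtain ⟨hA0, hAadd, hAneg, hAmul, hAinv⟩ := hA
  have hstarA : ∀ a ∈ A, ∀ w : B, starOp a w ∈ A := fun a ha w =>
    hstar (AddSubgroup.subset_closure ⟨a, ha, w, trivial, rfl⟩)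
  have H : ∀ m : ℕ, ∀ b : B, ∃ a ∈ A, ∃ x ∈ rightPow B m, b = a + x := by
    intro m
    induction m with
    | zero => exact fun b => ⟨0, hA0, b, trivial, (zero_add b).symm⟩
    | succ m ih =>
        have hgen : ∀ c d : B, ∃ a ∈ A, ∃ x ∈ rightPow B (m + 1), starOp c d = a + x := by
          intro c d
          obtain ⟨a, ha, y, hy, rfl⟩ := ih c
          have hy' : lam a⁻¹ y ∈ rightPow B m := (rp_lam_circ m).1 a⁻¹ y hy
          have hc : a + y = a * (lam a⁻¹ y) := by rw [circ_eq_add_lam, lam_lam_inv]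
          rw [hc, star_key]
          refine ⟨starOp a (starOp (lam a⁻¹ y) d) + starOp a d,
            hAadd _ (hstarA a ha _) _ (hstarA a ha _),
            -(starOp a d) + starOp (lam a⁻¹ y) d + starOp a d, ?_, ?_⟩
          · have h2 := rp_add_conj (-(starOp a d)) (rp_star_mem hy' d)
            simpa [sub_neg_eq_add] using h2
          · simp [add_assoc, add_neg_cancel_left, neg_add_cancel_left]
        have hB2 : ∀ x ∈ rightPow B 1, ∃ a ∈ A, ∃ x' ∈ rightPow B (m + 1), x = a + x' := by
          intro x hx
          rw [mem_rightPow_succ] at hx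
          induction hx using AddSubgroup.closure_induction with
          | mem w hw =>
              obtain ⟨c, -, d, -, rfl⟩ := hw
              exact hgen c d
          | zero => exact ⟨0, hA0, 0, rp_zero_mem _, by simp⟩
          | add u v _ _ hu hv =>
              obtain ⟨a1, ha1, x1, hx1, rfl⟩ := hu
              obtain ⟨a2, ha2, x2, hx2, rfl⟩ := hv
              refine ⟨a1 + a2, hAadd _ ha1 _ ha2, (-a2 + x1 + a2) + x2,
                rp_add_mem ?_ hx2, by simp [add_assoc, neg_add_cancel_left]⟩
              have h2 := rp_add_conj (-a2) hx1
              simpa [sub_neg_eq_add] using h2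
          | neg u _ hu =>
              obtain ⟨a1, ha1, x1, hx1, rfl⟩ := hu
              exact ⟨-a1, hAneg _ ha1, a1 + (-x1) - a1,
                rp_add_conj a1 (rp_neg_mem hx1),
                by simp [sub_eq_add_neg, neg_add_rev, add_assoc, neg_add_cancel_left]⟩
        intro b
        obtain ⟨a, ha, x, hx, rfl⟩ := hsum b
        obtain ⟨a', ha', x', hx', rfl⟩ := hB2 x hx
        exact ⟨a + a', hAadd _ ha _ ha', x', hx', (add_assoc _ _ _).symm⟩
  ext b
  simp only [Set.mem_univ, iff_true]
  obtain ⟨a, ha, x, hx, rfl⟩ := H n b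
  rw [hn] at hx
  simp only [Set.mem_singleton_iff] at hx
  rw [hx, add_zero]
  exact ha

end SkewBrace
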